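/- Suppose σ_{z·x} > 0, σ_{w·x} > 0, σ_{w·zx} > 0 and σ_{z·wx} > 0. Then the t-ratio t_W admits the alternative representation t_W = df^{1/2} · σ_{wz·x} / (σ_{z·x} · σ_{w·zx}). -/

import Mathlib

open scoped BigOperators

/-- Weighted inner product on ℝⁿ: `(A,B) := (∑ i, wᵢ Aᵢ Bᵢ) / (∑ i, wᵢ)`. -/
noncomputable def wip {n : ℕ} (w A B : Fin n → ℝ) : ℝ :=
  (∑ i, w i * A i * B i) / (∑ i, w i)

/-- `P` is the best linear predictor (orthogonal projection with respect to the
weighted inner product `wip w`) of `A` onto the span of the collection `C`. -/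
def IsBlp {n : ℕ} (w : Fin n → ℝ) (C : Set (Fin n → ℝ)) (A P : Fin n → ℝ) : Prop :=
  P ∈ Submodule.span ℝ C ∧ ∀ v ∈ Submodule.span ℝ C, wip w (A - P) v = 0


lemma wip_comm {n : ℕ} (w A B : Fin n → ℝ) : wip w A B = wip w B A := by
  simp only [wip]; congr 1; apply Finset.sum_congr rfl; intros; ring

lemma wip_sub_left {n : ℕ} (w A B C : Fin n → ℝ) :
    wip w (A - B) C = wip w A C - wip w B C := by
  simp only [wip, Pi.sub_apply, ← sub_div, ← Finset.sum_sub_distrib]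
  congr 1; apply Finset.sum_congr rfl; intros; ring

lemma wip_sub_right {n : ℕ} (w A B C : Fin n → ℝ) :
    wip w A (B - C) = wip w A B - wip w A C := by
  rw [wip_comm, wip_sub_left, wip_comm w B, wip_comm w C]

lemma wip_add_right {n : ℕ} (w A B C : Fin n → ℝ) :
    wip w A (B + C) = wip w A B + wip w A C := by
  simp only [wip, Pi.add_apply, ← add_div, ← Finset.sum_add_distrib]
  congr 1; apply Finset.sum_congr rfl; intros; ring

lemma wip_smul_right {n : ℕ} (w : Fin n → ℝ) (r : ℝ) (A B : Fin n → ℝ) :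
    wip w A (r • B) = r * wip w A B := by
  simp only [wip, Pi.smul_apply, smul_eq_mul]
  rw [← mul_div_assoc, Finset.mul_sum]
  congr 1; apply Finset.sum_congr rfl; intros; ring

lemma wip_smul_left {n : ℕ} (w : Fin n → ℝ) (r : ℝ) (A B : Fin n → ℝ) :
    wip w (r • A) B = r * wip w A B := by
  rw [wip_comm, wip_smul_right, wip_comm]

lemma wip_self_zero {n : ℕ} (w : Fin n → ℝ) (hw : ∀ i, 0 < w i) (hn : n ≠ 0)
    (v : Fin n → ℝ) (h : wip w v v = 0) : v = 0 := by
  have hT : 0 < ∑ i, w i := by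
    apply Finset.sum_pos (fun i _ => hw i)
    rwa [Finset.univ_nonempty_iff, ← Fin.pos_iff_nonempty, Nat.pos_iff_ne_zero]
  have hS : (∑ i, w i * v i * v i) = 0 := by
    have := h
    rw [wip, div_eq_zero_iff] at this
    rcases this with h' | h'
    · exact h'
    · exact absurd h' hT.ne'
  funext i
  have h0 := (Finset.sum_eq_zero_iff_of_nonneg (fun i _ => by nlinarith [hw i, sq_nonneg (v i)])).mp hS i (Finset.mem_univ i)
  rw [mul_assoc] at h0
  rcases mul_eq_zero.mp h0 with h' | h'
  · exact absurd h' (hw i).ne'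
  · simpa using mul_self_eq_zero.mp h' 

/-- key residual variance formula -/
lemma resid_formula {n : ℕ} (w : Fin n → ℝ) (hw : ∀ i, 0 < w i) (hn : n ≠ 0)
    (X : Set (Fin n → ℝ)) (Z W Pzx Pwx Pzwx : Fin n → ℝ)
    (hPzx : IsBlp w X Z Pzx) (hPwx : IsBlp w X W Pwx)
    (hPzwx : IsBlp w (insert W X) Z Pzwx)
    (hb : wip w (W - Pwx) (W - Pwx) ≠ 0) :
    wip w (Z - Pzwx) (Z - Pzwx)
      = wip w (Z - Pzx) (Z - Pzx)
        - wip w (W - Pwx) (Z - Pzx) ^ 2 / wip w (W - Pwx) (W - Pwx) := by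
  set zr := Z - Pzx with hzr
  set wr := W - Pwx with hwr
  set b := wip w wr wr with hbdef
  set c := wip w wr zr with hcdef
  set β := c / b with hβ
  set Q := Pzx + β • wr with hQ
  clear_value zr wr b c β Q
  have hXsub : Submodule.span ℝ X ≤ Submodule.span ℝ (insert W X) :=
    Submodule.span_mono (Set.subset_insert W X)
  have hWmem : W ∈ Submodule.span ℝ (insert W X) :=
    Submodule.subset_span (Set.mem_insert W X)
  have hQmem : Q ∈ Submodule.span ℝ (insert W X) := by
    rw [hQ, hwr]
    apply Submodule.add_mem _ (hXsub hPzx.1)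
    exact Submodule.smul_mem _ _ (Submodule.sub_mem _ hWmem (hXsub hPwx.1))
  have hZQ : Z - Q = zr - β • wr := by
    funext i; simp [hQ, hzr]; ring
  have hczw : wip w zr wr = c := by rw [hcdef, wip_comm]
  have horth : ∀ v ∈ Submodule.span ℝ (insert W X), wip w (Z - Q) v = 0 := by
    intro v hv
    rw [Submodule.mem_span_insert] at hv
    obtain ⟨r, u, hu, rfl⟩ := hv
    rw [hZQ, wip_add_right, wip_smul_right]
    have hu1 : wip w (zr - β • wr) u = 0 := by
      rw [wip_sub_left, wip_smul_left, hzr, hwr, hPzx.2 u hu, hPwx.2 u hu]; ring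
    have hW : wip w (zr - β • wr) W = 0 := by
      have hWsplit : wip w (zr - β • wr) W
          = wip w (zr - β • wr) wr + wip w (zr - β • wr) Pwx := by
        rw [← wip_add_right]; congr 1; funext i; simp [hwr]
      have hPwxX : wip w (zr - β • wr) Pwx = 0 := by
        rw [wip_sub_left, wip_smul_left, hzr, hwr, hPzx.2 Pwx hPwx.1, hPwx.2 Pwx hPwx.1]; ring
      rw [hWsplit, hPwxX, wip_sub_left, wip_smul_left, hczw, ← hbdef]
      rw [hβ]; field_simp [hβ]; ring
    rw [hW, hu1]; ring
  have hPeq : Pzwx = Q := by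
    have hD : wip w (Pzwx - Q) (Pzwx - Q) = 0 := by
      have h1 : wip w (Z - Pzwx) (Pzwx - Q) = 0 :=
        hPzwx.2 _ (Submodule.sub_mem _ hPzwx.1 hQmem)
      have h2 : wip w (Z - Q) (Pzwx - Q) = 0 :=
        horth _ (Submodule.sub_mem _ hPzwx.1 hQmem)
      have : wip w (Z - Q) (Pzwx - Q) - wip w (Z - Pzwx) (Pzwx - Q)
          = wip w (Pzwx - Q) (Pzwx - Q) := by
        rw [← wip_sub_left]; congr 1; funext i; simp only [Pi.sub_apply]; ring
      rw [← this, h1, h2, sub_zero]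
    have := wip_self_zero w hw hn _ hD
    have : Pzwx - Q = 0 := this
    funext i
    have := congrFun this i
    simpa [sub_eq_zero] using this
  have hZres : Z - Pzwx = zr - β • wr := by rw [hPeq]; exact hZQ
  rw [hZres]
  have expand : wip w (zr - β • wr) (zr - β • wr)
      = wip w zr zr - β * wip w zr wr - β * wip w wr zr + β * β * wip w wr wr := by
    simp only [wip_sub_left, wip_sub_right, wip_smul_left, wip_smul_right]; ring
  rw [expand, hczw, ← hcdef, ← hbdef]
  rw [hβ]; field_simp [hβ]
  ring

/-- if `σ_{z·x} > 0`, `σ_{w·x} > 0`, `σ_{w·zx} > 0` and `σ_{z·wx} > 0`,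
then the `t`-ratio `t_W = (σ_{wz·x}/σ²_{w·x}) / (df^{−1/2} σ_{z·wx}/σ_{w·x})` admits the
alternative representation `t_W = df^{1/2} · σ_{wz·x} / (σ_{z·x} · σ_{w·zx})`. -/
theorem stmt1 {n : ℕ} (w : Fin n → ℝ) (hw : ∀ i, 0 < w i)
    (X : Set (Fin n → ℝ)) (hXfin : X.Finite)
    (h1 : (fun _ => (1 : ℝ)) ∈ Submodule.span ℝ X)
    (Z W : Fin n → ℝ)
    (Pzx Pwx Pwzx Pzwx : Fin n → ℝ)
    (hPzx : IsBlp w X Z Pzx)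
    (hPwx : IsBlp w X W Pwx)
    (hPwzx : IsBlp w (insert Z X) W Pwzx)
    (hPzwx : IsBlp w (insert W X) Z Pzwx)
    (hσzx : 0 < wip w (Z - Pzx) (Z - Pzx))
    (hσwx : 0 < wip w (W - Pwx) (W - Pwx))
    (hσwzx : 0 < wip w (W - Pwzx) (W - Pwzx))
    (hσzwx : 0 < wip w (Z - Pzwx) (Z - Pzwx)) :
    let df : ℝ := (n : ℝ) - (Module.finrank ℝ (Submodule.span ℝ X) : ℝ) - 1
    let σzx := Real.sqrt (wip w (Z - Pzx) (Z - Pzx))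
    let σwx := Real.sqrt (wip w (W - Pwx) (W - Pwx))
    let σwzx := Real.sqrt (wip w (W - Pwzx) (W - Pwzx))
    let σzwx := Real.sqrt (wip w (Z - Pzwx) (Z - Pzwx))
    let tW := (wip w (W - Pwx) (Z - Pzx) / wip w (W - Pwx) (W - Pwx)) /
      (σzwx / (Real.sqrt df * σwx))
    tW = Real.sqrt df * wip w (W - Pwx) (Z - Pzx) / (σzx * σwzx) := by
  intro df σzx σwx σwzx σzwx tW
  have hn : n ≠ 0 := by
    rintro rfl
    simp [wip] at hσzx
  have hA : wip w (Z - Pzwx) (Z - Pzwx)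
      = wip w (Z - Pzx) (Z - Pzx)
        - wip w (W - Pwx) (Z - Pzx) ^ 2 / wip w (W - Pwx) (W - Pwx) :=
    resid_formula w hw hn X Z W Pzx Pwx Pzwx hPzx hPwx hPzwx hσwx.ne'
  have hB : wip w (W - Pwzx) (W - Pwzx)
      = wip w (W - Pwx) (W - Pwx)
        - wip w (W - Pwx) (Z - Pzx) ^ 2 / wip w (Z - Pzx) (Z - Pzx) := by
    have h := resid_formula w hw hn X W Z Pwx Pzx Pwzx hPwx hPzx hPwzx hσzx.ne'
    rwa [wip_comm w (Z - Pzx) (W - Pwx)] at h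
  set a := wip w (Z - Pzx) (Z - Pzx) with ha
  set b := wip w (W - Pwx) (W - Pwx) with hbb
  set c := wip w (W - Pwx) (Z - Pzx) with hc
  have key : σzx * σwzx = σwx * σzwx := by
    show Real.sqrt a * Real.sqrt (wip w (W - Pwzx) (W - Pwzx))
        = Real.sqrt b * Real.sqrt (wip w (Z - Pzwx) (Z - Pzwx))
    rw [hA, hB, ← Real.sqrt_mul hσzx.le, ← Real.sqrt_mul hσwx.le]
    congr 1
    field_simp
  show c / b / (σzwx / (Real.sqrt df * σwx)) = Real.sqrt df * c / (σzx * σwzx)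
  rw [key]
  have hwpos : (0:ℝ) < σwx := Real.sqrt_pos.mpr hσwx
  have hzwpos : (0:ℝ) < σzwx := Real.sqrt_pos.mpr hσzwx
  have hb2 : b = σwx * σwx := (Real.mul_self_sqrt hσwx.le).symm
  rw [div_div_eq_mul_div, hb2]
  field_simp
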